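/- Local truncation error of the s-step Adams–Bashforth method: there exists a constant C_s > 0 depending only on s such that for every h > 0 and every (s+1)-times continuously differentiable function y : [-(s-1)h, h] → ℝ, |y(h) − y(0) − h ∑_{j=0}^{s-1} β_{j,s}^{AB} y'(-j h)| ≤ C_s h^{s+1} sup_{ω ∈ [-(s-1)h, h]} |y^{(s+1)}(ω)|. -/

import Mathlib

open MeasureTheory intervalIntegral

noncomputable section

/-- The Lagrange basis polynomial `ℓ_j^{0:s-1}` on the equispaced nodes
`t_{i-k} = -k·h`, `k = 0, …, s-1`. -/
def lagAB (s : ℕ) (h : ℝ) (j : Fin s) (ω : ℝ) : ℝ :=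
  ∏ k ∈ Finset.univ.erase j, (ω + (k : ℝ) * h) / (((k : ℝ) - (j : ℝ)) * h)

/-- The `s`-step Adams–Bashforth coefficients `β_{j,s}^{AB} = h⁻¹ ∫_0^h ℓ_j^{0:s-1}`. -/
def betaAB (s : ℕ) (h : ℝ) (j : Fin s) : ℝ :=
  h⁻¹ * ∫ ω in (0:ℝ)..h, lagAB s h j ω

lemma lagAB_eq_eval (s : ℕ) (h : ℝ) (j : Fin s) (ω : ℝ) :
    lagAB s h j ω =
      Polynomial.eval ω (Lagrange.basis Finset.univ (fun k : Fin s => -(k : ℝ) * h) j) := by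
  unfold lagAB Lagrange.basis
  rw [Polynomial.eval_prod]
  refine Finset.prod_congr rfl fun k hk => ?_
  simp only [Lagrange.basisDivisor, Polynomial.eval_mul, Polynomial.eval_C,
    Polynomial.eval_sub, Polynomial.eval_X]
  rw [show (-(j : ℝ) * h - -(k : ℝ) * h) = ((k : ℝ) - (j : ℝ)) * h by ring,
    show ω - -(k : ℝ) * h = ω + (k : ℝ) * h by ring, div_eq_inv_mul]

lemma lagAB_exact (s : ℕ) {h : ℝ} (hh : h ≠ 0) (p : Polynomial ℝ)
    (hp : p.degree < (s : ℕ)) (ω : ℝ) :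
    ∑ j : Fin s, lagAB s h j ω * p.eval (-(j : ℝ) * h) = p.eval ω := by
  set v : Fin s → ℝ := fun k => -(k : ℝ) * h with hv
  have hinj : Set.InjOn v (Finset.univ : Finset (Fin s)) := by
    intro x _ z _ hxz
    simp only [hv] at hxz
    have : (x : ℝ) = (z : ℝ) := by
      have := mul_right_cancel₀ hh hxz
      linarith
    exact Fin.ext (by exact_mod_cast this)
  have hdeg : p.degree < (Finset.univ : Finset (Fin s)).card := by
    simpa using hp
  have hinterp := Lagrange.eq_interpolate (v := v) hinj hdeg
  conv_rhs => rw [hinterp]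
  rw [Lagrange.interpolate_apply, Polynomial.eval_finset_sum]
  refine Finset.sum_congr rfl fun j _ => ?_
  rw [Polynomial.eval_mul, Polynomial.eval_C, lagAB_eq_eval s h j ω, mul_comm]

lemma lagAB_bound (s : ℕ) (hs : 1 ≤ s) {h : ℝ} (hh : 0 < h) (j : Fin s) {ω : ℝ}
    (hω : ω ∈ Set.Icc (0:ℝ) h) : |lagAB s h j ω| ≤ (s : ℝ) ^ s := by
  have hs1 : (1 : ℝ) ≤ (s : ℝ) := by exact_mod_cast hs
  calc |lagAB s h j ω|
      = ∏ k ∈ Finset.univ.erase j, |(ω + (k : ℝ) * h) / (((k : ℝ) - (j : ℝ)) * h)| := by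
        rw [lagAB, Finset.abs_prod]
    _ ≤ ∏ k ∈ Finset.univ.erase j, (s : ℝ) := by
        refine Finset.prod_le_prod (fun k _ => abs_nonneg _) fun k hk => ?_
        have hkj : k.val ≠ j.val := fun e => (Finset.mem_erase.mp hk).1 (Fin.ext e)
        have h1 : (1 : ℤ) ≤ |(k.val : ℤ) - (j.val : ℤ)| :=
          Int.one_le_abs (sub_ne_zero.mpr (by exact_mod_cast hkj))
        have h1' : (1 : ℝ) ≤ |(k : ℝ) - (j : ℝ)| := by
          have : ((|(k.val : ℤ) - (j.val : ℤ)| : ℤ) : ℝ) = |(k : ℝ) - (j : ℝ)| := by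
            push_cast [Int.cast_abs]; ring_nf
          rw [← this]; exact_mod_cast h1
        have hden : h ≤ |((k : ℝ) - (j : ℝ)) * h| := by
          rw [abs_mul, abs_of_pos hh]
          nlinarith
        have hnum : |ω + (k : ℝ) * h| ≤ (s : ℝ) * h := by
          have hk0 : (0 : ℝ) ≤ (k : ℝ) := Nat.cast_nonneg _
          have hks : (k : ℝ) + 1 ≤ (s : ℝ) := by exact_mod_cast k.isLt
          rw [abs_of_nonneg (by nlinarith [hω.1])]
          nlinarith [hω.2]
        rw [abs_div, div_le_iff₀ (lt_of_lt_of_le hh hden)]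
        calc |ω + (k : ℝ) * h| ≤ (s : ℝ) * h := hnum
          _ ≤ (s : ℝ) * |((k : ℝ) - (j : ℝ)) * h| := by nlinarith
    _ = (s : ℝ) ^ (Finset.univ.erase j).card := by rw [Finset.prod_const]
    _ ≤ (s : ℝ) ^ s := by
        apply pow_le_pow_right₀ hs1
        calc (Finset.univ.erase j).card ≤ (Finset.univ : Finset (Fin s)).card :=
              Finset.card_le_card (Finset.erase_subset _ _)
          _ = s := by simp

lemma lagAB_continuous (s : ℕ) (h : ℝ) (j : Fin s) : Continuous (lagAB s h j) := by
  unfold lagAB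
  exact continuous_finset_prod _ fun k _ =>
    ((continuous_id.add continuous_const).div_const _)

/-- Local truncation error of the `s`-step Adams–Bashforth method: there is a
constant `C_s > 0` depending only on `s` such that for every `h > 0` and every
`(s+1)`-times continuously differentiable `y : [-(s-1)h, h] → ℝ`,
`|y(h) − y(0) − h ∑_{j=0}^{s-1} β_{j,s}^{AB} y'(-jh)| ≤ C_s h^{s+1} sup |y^{(s+1)}|`. -/
theorem adamsBashforth_local_truncation_error (s : ℕ) (hs : 1 ≤ s) :
    ∃ C : ℝ, 0 < C ∧ ∀ h : ℝ, 0 < h → ∀ y : ℝ → ℝ,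
      ContDiffOn ℝ (s + 1) y (Set.Icc (-((s : ℝ) - 1) * h) h) →
      ∀ M : ℝ,
        (∀ ω ∈ Set.Icc (-((s : ℝ) - 1) * h) h,
          |iteratedDerivWithin (s + 1) y (Set.Icc (-((s : ℝ) - 1) * h) h) ω| ≤ M) →
        |y h - y 0 - h * ∑ j : Fin s,
            betaAB s h j *
              derivWithin y (Set.Icc (-((s : ℝ) - 1) * h) h) (-(j : ℝ) * h)| ≤
          C * h ^ (s + 1) * M := by
  obtain ⟨n, rfl⟩ : ∃ n, s = n + 1 := ⟨s - 1, (Nat.sub_add_cancel hs).symm⟩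
  set s : ℕ := n + 1 with hsdef
  have hs1 : (1 : ℝ) ≤ (s : ℝ) := by exact_mod_cast hs
  have hsp : (0 : ℝ) < (s : ℝ) := lt_of_lt_of_le one_pos hs1
  refine ⟨(1 + (s : ℝ) * (s : ℝ) ^ s) * (s : ℝ) ^ s / (Nat.factorial n),
    div_pos (mul_pos (by positivity) (pow_pos hsp s))
      (by exact_mod_cast Nat.factorial_pos n), ?_⟩
  intro h hh y hy M hM
  set a : ℝ := -((s : ℝ) - 1) * h with ha
  set I := Set.Icc a h with hIdef
  have ha0 : a ≤ 0 := by rw [ha]; nlinarith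
  have hah : a < h := lt_of_le_of_lt ha0 hh
  have hI : UniqueDiffOn ℝ I := uniqueDiffOn_Icc hah
  have h0I : (0 : ℝ) ∈ I := ⟨ha0, hh.le⟩
  have hsub : Set.Icc (0 : ℝ) h ⊆ I := Set.Icc_subset_Icc ha0 le_rfl
  have hnode : ∀ j : Fin s, -(j : ℝ) * h ∈ I := by
    intro j
    have hjs : (j : ℝ) + 1 ≤ (s : ℝ) := by exact_mod_cast j.isLt
    have hj0 : (0 : ℝ) ≤ (j : ℝ) := Nat.cast_nonneg _
    constructor
    · rw [ha]; nlinarith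
    · nlinarith
  set g := derivWithin y I with hgdef
  have hg : ContDiffOn ℝ s g I := by
    apply hy.derivWithin hI
    exact_mod_cast le_refl ((s : ℕ∞) + 1)
  have hM0 : 0 ≤ M := (abs_nonneg _).trans (hM 0 h0I)
  have hgM : ∀ x ∈ I, |iteratedDerivWithin s g I x| ≤ M := by
    intro x hx
    rw [hgdef, ← iteratedDerivWithin_succ']
    exact hM x hx
  -- Taylor polynomial of g of degree n centered at a, as a polynomial
  set p : Polynomial ℝ := ∑ k ∈ Finset.range s,
    Polynomial.C ((k.factorial : ℝ)⁻¹ * iteratedDerivWithin k g I a) *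
      (Polynomial.X - Polynomial.C a) ^ k with hpdef
  have hpdeg : p.degree < (s : ℕ) := by
    apply lt_of_le_of_lt (Polynomial.degree_sum_le _ _)
    rw [Finset.sup_lt_iff (by exact_mod_cast WithBot.bot_lt_coe s)]
    intro k hk
    calc (Polynomial.C ((k.factorial : ℝ)⁻¹ * iteratedDerivWithin k g I a) *
          (Polynomial.X - Polynomial.C a) ^ k).degree
        ≤ (Polynomial.C ((k.factorial : ℝ)⁻¹ * iteratedDerivWithin k g I a)).degree +
            ((Polynomial.X - Polynomial.C a) ^ k).degree := Polynomial.degree_mul_le _ _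
      _ ≤ 0 + (k : WithBot ℕ) := by
          refine add_le_add Polynomial.degree_C_le ?_
          rw [Polynomial.degree_pow, Polynomial.degree_X_sub_C, nsmul_eq_mul, mul_one]
      _ = (k : WithBot ℕ) := zero_add _
      _ < (s : WithBot ℕ) := by exact_mod_cast Finset.mem_range.mp hk
  have hpeval : ∀ x : ℝ, p.eval x = taylorWithinEval g n I a x := by
    intro x
    rw [taylor_within_apply, hpdef, Polynomial.eval_finset_sum]
    refine Finset.sum_congr rfl fun k _ => ?_
    simp only [Polynomial.eval_mul, Polynomial.eval_C, Polynomial.eval_pow,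
      Polynomial.eval_sub, Polynomial.eval_X, smul_eq_mul]
    ring
  -- Taylor remainder bound
  set K : ℝ := M * ((s : ℝ) * h) ^ s / (Nat.factorial n) with hKdef
  have hK0 : 0 ≤ K := by positivity
  have htay : ∀ x ∈ I, |g x - p.eval x| ≤ K := by
    intro x hx
    rw [hpeval]
    have hC' : ∀ z ∈ I, ‖iteratedDerivWithin (n + 1) g I z‖ ≤ M := by
      intro z hz
      rw [Real.norm_eq_abs]
      exact hgM z hz
    have hg' : ContDiffOn ℝ ((n : ℕ∞) + 1) g I := by exact_mod_cast hg
    have hb := taylor_mean_remainder_bound hah.le hg' hx hC'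
    rw [Real.norm_eq_abs] at hb
    refine hb.trans ?_
    rw [hKdef]
    have hxa0 : 0 ≤ x - a := sub_nonneg.mpr hx.1
    have hxa : x - a ≤ (s : ℝ) * h := by
      have := hx.2
      rw [ha] at *
      nlinarith
    gcongr
  -- continuity / integrability
  have hgcont : ContinuousOn g I := hg.continuousOn
  have hgint : IntervalIntegrable g volume 0 h :=
    (hgcont.mono hsub).intervalIntegrable_of_Icc hh.le
  -- fundamental theorem of calculus
  have hftc : ∫ ω in (0:ℝ)..h, g ω = y h - y 0 := by
    apply intervalIntegral.integral_eq_sub_of_hasDerivAt_of_le hh.le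
      ((hy.continuousOn).mono hsub) ?_ hgint
    intro x hx
    have hxI : x ∈ I := hsub ⟨hx.1.le, hx.2.le⟩
    have hdw : HasDerivWithinAt y (g x) I x :=
      ((hy.differentiableOn (by simp)) x hxI).hasDerivWithinAt
    exact hdw.hasDerivAt (Icc_mem_nhds (lt_of_le_of_lt ha0 hx.1) hx.2)
  -- rewrite the error as a single integral
  have hbeta : ∀ j : Fin s, h * betaAB s h j = ∫ ω in (0:ℝ)..h, lagAB s h j ω := by
    intro j
    rw [betaAB, ← mul_assoc, mul_inv_cancel₀ hh.ne', one_mul]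
  have hlagint : ∀ j : Fin s,
      IntervalIntegrable (fun ω => lagAB s h j ω * g (-(j : ℝ) * h)) volume 0 h :=
    fun j => ((lagAB_continuous s h j).mul continuous_const).intervalIntegrable 0 h
  have herr : y h - y 0 - h * ∑ j : Fin s, betaAB s h j * g (-(j : ℝ) * h) =
      ∫ ω in (0:ℝ)..h, (g ω - ∑ j : Fin s, lagAB s h j ω * g (-(j : ℝ) * h)) := by
    have hsumint : IntervalIntegrable
        (fun ω => ∑ j : Fin s, lagAB s h j ω * g (-(j : ℝ) * h)) volume 0 h := by
      apply Continuous.intervalIntegrable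
      exact continuous_finset_sum _ fun j _ => (lagAB_continuous s h j).mul continuous_const
    rw [intervalIntegral.integral_sub hgint hsumint,
      intervalIntegral.integral_finset_sum (fun j _ => hlagint j), hftc]
    congr 1
    rw [Finset.mul_sum]
    refine Finset.sum_congr rfl fun j _ => ?_
    rw [intervalIntegral.integral_mul_const, ← hbeta j]
    ring
  -- pointwise bound on the integrand
  have hkey : ∀ ω, g ω - ∑ j : Fin s, lagAB s h j ω * g (-(j : ℝ) * h) =
      (g ω - p.eval ω) - ∑ j : Fin s, lagAB s h j ω * (g (-(j : ℝ) * h) - p.eval (-(j : ℝ) * h)) := by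
    intro ω
    have hex := lagAB_exact s hh.ne' p hpdeg ω
    simp only [mul_sub, Finset.sum_sub_distrib, hex]
    ring
  set P : ℝ := (1 + (s : ℝ) * (s : ℝ) ^ s) * K with hPdef
  have hbound : ∀ ω ∈ Set.uIoc (0:ℝ) h,
      ‖g ω - ∑ j : Fin s, lagAB s h j ω * g (-(j : ℝ) * h)‖ ≤ P := by
    intro ω hω
    rw [Set.uIoc_of_le hh.le] at hω
    have hωI : ω ∈ Set.Icc (0:ℝ) h := ⟨hω.1.le, hω.2⟩
    rw [Real.norm_eq_abs, hkey ω]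
    have h1 : |g ω - p.eval ω| ≤ K := htay ω (hsub hωI)
    have h2 : |∑ j : Fin s, lagAB s h j ω * (g (-(j : ℝ) * h) - p.eval (-(j : ℝ) * h))| ≤
        (s : ℝ) * ((s : ℝ) ^ s * K) := by
      refine (Finset.abs_sum_le_sum_abs _ _).trans ?_
      have : ∀ j ∈ (Finset.univ : Finset (Fin s)),
          |lagAB s h j ω * (g (-(j : ℝ) * h) - p.eval (-(j : ℝ) * h))| ≤ (s : ℝ) ^ s * K := by
        intro j _
        rw [abs_mul]
        exact mul_le_mul (lagAB_bound s hs hh j hωI) (htay _ (hnode j)) (abs_nonneg _)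
          (by positivity)
      refine (Finset.sum_le_sum this).trans ?_
      rw [Finset.sum_const, Finset.card_univ, Fintype.card_fin, nsmul_eq_mul]
    calc |(g ω - p.eval ω) - ∑ j : Fin s, lagAB s h j ω *
            (g (-(j : ℝ) * h) - p.eval (-(j : ℝ) * h))|
        ≤ |g ω - p.eval ω| + |∑ j : Fin s, lagAB s h j ω *
            (g (-(j : ℝ) * h) - p.eval (-(j : ℝ) * h))| := abs_sub _ _
      _ ≤ K + (s : ℝ) * ((s : ℝ) ^ s * K) := add_le_add h1 h2
      _ = P := by rw [hPdef]; ring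
  have hmain := intervalIntegral.norm_integral_le_of_norm_le_const hbound
  rw [herr]
  rw [Real.norm_eq_abs] at hmain
  refine hmain.trans ?_
  rw [hPdef, hKdef, sub_zero, abs_of_pos hh, mul_pow, pow_succ]
  have hfac : (Nat.factorial n : ℝ) ≠ 0 := by
    exact_mod_cast (Nat.factorial_pos n).ne'
  apply le_of_eq
  field_simp
  ring
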